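/- For the transfer operator T_K = [[FQL+G, FQ],[QL, Q]] and the orthogonal matrices θ, ψ defined from F and L, the identity θ T_K ψ = [[S^{-1/2}G V^{-1/2}, S^{-1/2}G L^T U^{-1/2}], [T^{-1/2}F^T G V^{-1/2}, T^{1/2} Q U^{1/2} + T^{-1/2}F^T G L^T U^{-1/2}]] holds; in particular, Q appears only in the (2,2) block. -/

import Mathlib

open Matrix

private lemma inv_eq_of_sq {n : ℕ} {A B : Matrix (Fin n) (Fin n) ℝ}
    (hA : A.PosDef) (hB : B.PosDef) (h : A * A = (B * B)⁻¹) : A = B⁻¹ := by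
  have hBinv : (B⁻¹).PosDef := hB.inv
  open scoped MatrixOrder in
  refine (CFC.sq_eq_sq_iff A B⁻¹ hA.posSemidef.nonneg hBinv.posSemidef.nonneg).1 ?_
  rw [pow_two, pow_two, h, Matrix.mul_inv_rev]

/-- The identity `θ T_K ψ = [[S^{-1/2}G V^{-1/2}, S^{-1/2}G Lᵀ U^{-1/2}],
[T^{-1/2}Fᵀ G V^{-1/2}, T^{1/2} Q U^{1/2} + T^{-1/2}Fᵀ G Lᵀ U^{-1/2}]]`, where
`T_K = [[FQL+G, FQ],[QL, Q]]`; in particular `Q` appears only in the (2,2) block. -/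
theorem stmt_16 {n : ℕ} (F G L Q : Matrix (Fin n) (Fin n) ℝ)
    (Sih Tih Uih Vih Th Uh : Matrix (Fin n) (Fin n) ℝ)
    (hSih : Sih.PosDef) (hTih : Tih.PosDef) (hUih : Uih.PosDef) (hVih : Vih.PosDef)
    (hTh : Th.PosDef) (hUh : Uh.PosDef)
    (hSih2 : Sih * Sih = (1 + F * Fᵀ)⁻¹) (hTih2 : Tih * Tih = (1 + Fᵀ * F)⁻¹)
    (hUih2 : Uih * Uih = (1 + L * Lᵀ)⁻¹) (hVih2 : Vih * Vih = (1 + Lᵀ * L)⁻¹)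
    (hTh2 : Th * Th = 1 + Fᵀ * F) (hUh2 : Uh * Uh = 1 + L * Lᵀ) :
    ((Matrix.fromBlocks Sih 0 0 Tih) * (Matrix.fromBlocks 1 (-F) Fᵀ 1)) *
        (Matrix.fromBlocks (F * Q * L + G) (F * Q) (Q * L) Q) *
        ((Matrix.fromBlocks 1 Lᵀ (-L) 1) * (Matrix.fromBlocks Vih 0 0 Uih)) =
      Matrix.fromBlocks (Sih * G * Vih) (Sih * G * Lᵀ * Uih)
        (Tih * Fᵀ * G * Vih) (Th * Q * Uh + Tih * Fᵀ * G * Lᵀ * Uih) := by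
  have hT : Tih = Th⁻¹ := inv_eq_of_sq hTih hTh (by rw [hTih2, hTh2])
  have hU : Uih = Uh⁻¹ := inv_eq_of_sq hUih hUh (by rw [hUih2, hUh2])
  have hT1 : Tih * (1 + Fᵀ * F) = Th := by
    rw [hT, ← hTh2, ← mul_assoc, Matrix.nonsing_inv_mul _ ((Matrix.isUnit_iff_isUnit_det _).1 hTh.isUnit), one_mul]
  have hU1 : (1 + L * Lᵀ) * Uih = Uh := by
    rw [hU, ← hUh2, mul_assoc, Matrix.mul_nonsing_inv _ ((Matrix.isUnit_iff_isUnit_det _).1 hUh.isUnit), mul_one]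
  rw [← hT1, ← hU1]
  simp only [Matrix.fromBlocks_multiply]
  rw [Matrix.fromBlocks_inj]
  refine ⟨by noncomm_ring, by noncomm_ring, by noncomm_ring, by noncomm_ring⟩
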